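/- Let L be an Eulerian directed Laplacian and U = (L + Lᵀ)/2 its symmetrization. Then the symmetric matrix X = Lᵀ U† L satisfies U ⪯ X in the positive-semidefinite order, where U† denotes the Moore–Penrose pseudoinverse. -/

import Mathlib

open Matrix Finset

/-- `L` is an Eulerian directed Laplacian: nonpositive off-diagonal entries,
zero column sums, and zero row sums. -/
def IsEulerianLaplacian {n : ℕ} (L : Matrix (Fin n) (Fin n) ℝ) : Prop :=
  (∀ i j, i ≠ j → L i j ≤ 0) ∧ (∀ j, ∑ i, L i j = 0) ∧ (∀ i, ∑ j, L i j = 0)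

/-- `B` is the Moore–Penrose pseudoinverse of `A` (the four Penrose conditions). -/
def IsMoorePenrose {m : Type*} [Fintype m] [DecidableEq m]
    (A B : Matrix m m ℝ) : Prop :=
  A * B * A = A ∧ B * A * B = B ∧ (A * B)ᵀ = A * B ∧ (B * A)ᵀ = B * A

lemma mp_unique {m : Type*} [Fintype m] [DecidableEq m] {A B C : Matrix m m ℝ}
    (hB : IsMoorePenrose A B) (hC : IsMoorePenrose A C) : B = C := by
  obtain ⟨hB1, hB2, hB3, hB4⟩ := hB
  obtain ⟨hC1, hC2, hC3, hC4⟩ := hC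
  have hAB : A * B = A * C := by
    calc A * B = (A * B)ᵀ := hB3.symm
      _ = (A * C * (A * B))ᵀ := by rw [← Matrix.mul_assoc, hC1]
      _ = (A * B)ᵀ * (A * C)ᵀ := by rw [Matrix.transpose_mul]
      _ = (A * B) * (A * C) := by rw [hB3, hC3]
      _ = A * C := by rw [← Matrix.mul_assoc, hB1]
  have hBA : B * A = C * A := by
    calc B * A = (B * A)ᵀ := hB4.symm
      _ = ((B * A) * (C * A))ᵀ := by
        rw [← Matrix.mul_assoc, Matrix.mul_assoc B A C, Matrix.mul_assoc B (A*C) A, hC1]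
      _ = (C * A)ᵀ * (B * A)ᵀ := by rw [Matrix.transpose_mul]
      _ = (C * A) * (B * A) := by rw [hB4, hC4]
      _ = C * A := by
        rw [← Matrix.mul_assoc, Matrix.mul_assoc C A B, Matrix.mul_assoc C (A*B) A, hB1]
  calc B = B * A * B := hB2.symm
    _ = B * A * C := by rw [Matrix.mul_assoc, hAB, ← Matrix.mul_assoc]
    _ = C * A * C := by rw [hBA]
    _ = C := hC2

lemma quad_eq {n : ℕ} (M : Matrix (Fin n) (Fin n) ℝ)
    (hrow : ∀ i, ∑ j, M i j = 0) (hcol : ∀ j, ∑ i, M i j = 0) (x : Fin n → ℝ) :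
    x ⬝ᵥ M *ᵥ x = ∑ i, ∑ j, (1/2) * (-(M i j)) * (x i - x j)^2 := by
  have key : ∀ i j, (1/2 : ℝ) * (-(M i j)) * (x i - x j)^2
      = x i * (M i j * x j) - (1/2) * (M i j * (x i)^2) - (1/2) * (M i j * (x j)^2) := by
    intro i j; ring
  simp_rw [key, Finset.sum_sub_distrib]
  have h1 : ∀ i, ∑ j, (1/2 : ℝ) * (M i j * (x i)^2) = 0 := by
    intro i
    rw [← Finset.mul_sum]
    simp_rw [mul_comm (M i _) ((x i)^2), ← Finset.mul_sum, hrow]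
    ring
  have h2 : ∑ i, ∑ j, (1/2 : ℝ) * (M i j * (x j)^2) = 0 := by
    rw [Finset.sum_comm]
    refine Finset.sum_eq_zero fun j _ => ?_
    rw [← Finset.mul_sum, ← Finset.sum_mul, hcol]
    ring
  simp_rw [h1, h2]
  simp [dotProduct, Matrix.mulVec, Finset.mul_sum]

/-- For an Eulerian directed Laplacian `L` with symmetrization `U = (L + Lᵀ)/2`,
the matrix `X = Lᵀ U† L` satisfies `U ⪯ X` in the PSD order. -/
theorem symmetrization_le {n : ℕ} (L U Up : Matrix (Fin n) (Fin n) ℝ)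
    (hL : IsEulerianLaplacian L)
    (hU : U = (1 / 2 : ℝ) • (L + Lᵀ))
    (hUp : IsMoorePenrose U Up) :
    (Lᵀ * Up * L - U).PosSemidef := by
  obtain ⟨hoff, hcolL, hrowL⟩ := hL
  obtain ⟨hp1, hp2, hp3, hp4⟩ := hUp
  have hUe : ∀ i j, U i j = (L i j + L j i) / 2 := by
    intro i j; rw [hU]; simp [Matrix.smul_apply, Matrix.add_apply]; ring
  have hUs : Uᵀ = U := by
    ext i j; rw [Matrix.transpose_apply, hUe, hUe]; ring
  -- Up is symmetric, by uniqueness of the Moore–Penrose inverse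
  have hUps : Upᵀ = Up := by
    refine mp_unique (A := U) ?_ ⟨hp1, hp2, hp3, hp4⟩
    have e1 : U * Upᵀ = (Up * U)ᵀ := by rw [Matrix.transpose_mul, hUs]
    have e2 : Upᵀ * U = (U * Up)ᵀ := by rw [Matrix.transpose_mul, hUs]
    refine ⟨?_, ?_, ?_, ?_⟩
    · have := congrArg Matrix.transpose hp1
      simpa [Matrix.transpose_mul, hUs, Matrix.mul_assoc] using this
    · have := congrArg Matrix.transpose hp2
      simpa [Matrix.transpose_mul, hUs, Matrix.mul_assoc] using this
    · rw [e1, hp4]; exact hp4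
    · rw [e2, hp3]; exact hp3
  -- row and column sums of U vanish; off-diagonal entries are ≤ 0
  have hUrow : ∀ i, ∑ j, U i j = 0 := by
    intro i
    simp_rw [hUe]
    rw [← Finset.sum_div]
    rw [Finset.sum_add_distrib, hrowL i, hcolL i]
    norm_num
  have hUcol : ∀ j, ∑ i, U i j = 0 := by
    intro j
    have : ∀ i, U i j = U j i := fun i => by rw [hUe, hUe]; ring
    simp_rw [this]; exact hUrow j
  have hUoff : ∀ i j, i ≠ j → U i j ≤ 0 := by
    intro i j hij
    rw [hUe]
    have := hoff i j hij
    have := hoff j i (Ne.symm hij)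
    linarith
  -- U is positive semidefinite
  have hquad : ∀ x : Fin n → ℝ,
      x ⬝ᵥ U *ᵥ x = ∑ i, ∑ j, (1/2) * (-(U i j)) * (x i - x j)^2 :=
    quad_eq U hUrow hUcol
  have hterm_nonneg : ∀ (x : Fin n → ℝ) i j, 0 ≤ (1/2 : ℝ) * (-(U i j)) * (x i - x j)^2 := by
    intro x i j
    rcases eq_or_ne i j with rfl | hij
    · simp
    · have h := hUoff i j hij
      exact mul_nonneg (mul_nonneg (by norm_num) (by linarith)) (sq_nonneg _)
  have hUpsd : U.PosSemidef := by
    rw [Matrix.posSemidef_iff_dotProduct_mulVec]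
    constructor
    · rw [Matrix.IsHermitian, Matrix.conjTranspose_eq_transpose_of_trivial, hUs]
    · intro x
      simp only [star_trivial]
      rw [hquad x]
      exact Finset.sum_nonneg fun i _ => Finset.sum_nonneg fun j _ => hterm_nonneg x i j
  -- the skew part V
  set V : Matrix (Fin n) (Fin n) ℝ := L - U with hV
  have hVe : ∀ i j, V i j = (L i j - L j i) / 2 := by
    intro i j; rw [hV]; simp [Matrix.sub_apply, hUe]; ring
  have hVt : Vᵀ = -V := by
    ext i j; simp [Matrix.transpose_apply, hVe]; ring
  have hVrow : ∀ i, ∑ j, V i j = 0 := by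
    intro i
    simp_rw [hVe, ← Finset.sum_div, Finset.sum_sub_distrib, hrowL i, hcolL i]
    norm_num
  have hVU : ∀ i j, V i j ≠ 0 → U i j ≠ 0 := by
    intro i j hVij hUij
    rcases eq_or_ne i j with rfl | hij
    · exact hVij (by rw [hVe]; ring)
    · have h1 := hoff i j hij
      have h2 := hoff j i (Ne.symm hij)
      have : L i j + L j i = 0 := by
        have := hUe i j; rw [hUij] at this; linarith [this.symm]
      have hLij : L i j = 0 := by linarith
      have hLji : L j i = 0 := by linarith
      exact hVij (by rw [hVe, hLij, hLji]; ring)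
  -- kernel inclusion: U x = 0 → V x = 0
  have hker : ∀ x : Fin n → ℝ, U *ᵥ x = 0 → V *ᵥ x = 0 := by
    intro x hx
    have hdot : x ⬝ᵥ U *ᵥ x = 0 := by rw [hx, dotProduct_zero]
    rw [hquad x] at hdot
    have hall : ∀ i ∈ Finset.univ, ∀ j ∈ Finset.univ,
        (1/2 : ℝ) * (-(U i j)) * (x i - x j)^2 = 0 := by
      have := (Finset.sum_eq_zero_iff_of_nonneg
        (fun i _ => Finset.sum_nonneg fun j _ => hterm_nonneg x i j)).mp hdot
      intro i hi j hj
      exact (Finset.sum_eq_zero_iff_of_nonneg (fun j _ => hterm_nonneg x i j)).mp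
        (this i hi) j hj
    have hsame : ∀ i j, U i j ≠ 0 → x i = x j := by
      intro i j hUij
      have h := hall i (Finset.mem_univ i) j (Finset.mem_univ j)
      have h2 : (x i - x j)^2 = 0 := by
        by_contra hc
        have : (1/2 : ℝ) * (-(U i j)) = 0 := by
          rcases mul_eq_zero.mp h with h' | h'
          · exact h'
          · exact absurd h' hc
        have : U i j = 0 := by linarith [this]
        exact hUij this
      have := pow_eq_zero_iff (n := 2) (by norm_num) |>.mp h2
      linarith [this]
    ext i
    simp only [Matrix.mulVec, dotProduct, Pi.zero_apply]
    have : ∀ j, V i j * x j = V i j * x i := by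
      intro j
      rcases eq_or_ne (V i j) 0 with h | h
      · rw [h]; ring
      · rw [hsame i j (hVU i j h)]
    calc ∑ j, V i j * x j = ∑ j, V i j * x i := Finset.sum_congr rfl fun j _ => this j
      _ = (∑ j, V i j) * x i := by rw [Finset.sum_mul]
      _ = 0 := by rw [hVrow i, zero_mul]
  -- matrix-level consequences
  have hVP : V * (Up * U) = V := by
    have hUQ : U * (1 - Up * U) = 0 := by
      rw [Matrix.mul_sub, Matrix.mul_one, ← Matrix.mul_assoc, hp1, sub_self]
    have hVQ : V * (1 - Up * U) = 0 := by
      ext i j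
      have hcolker : U *ᵥ (fun k => (1 - Up * U) k j) = 0 := by
        ext i'
        have : (U * (1 - Up * U)) i' j = 0 := by rw [hUQ]; rfl
        simpa [Matrix.mul_apply, Matrix.mulVec, dotProduct] using this
      have := congrFun (hker _ hcolker) i
      simpa [Matrix.mul_apply, Matrix.mulVec, dotProduct] using this
    have hsub : V - V * (Up * U) = 0 := by rw [← hVQ, Matrix.mul_sub, Matrix.mul_one]
    exact (sub_eq_zero.mp hsub).symm
  have hPV : U * Up * V = V := by
    have h := congrArg Matrix.transpose hVP
    rw [Matrix.transpose_mul, Matrix.transpose_mul, hUs, hUps, hVt] at h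
    have h2 := congrArg Neg.neg h
    simpa [Matrix.mul_neg] using h2
  -- final computation
  have hLsum : L = U + V := by rw [hV]; abel
  have hLt : Lᵀ = U - V := by
    rw [hLsum, Matrix.transpose_add, hUs, hVt, sub_eq_add_neg]
  have hVPU : V * Up * U = V := by rw [Matrix.mul_assoc]; exact hVP
  have hexp : (U - V) * Up * (U + V) = U + V - V - V * Up * V := by
    rw [Matrix.sub_mul, Matrix.sub_mul, Matrix.mul_add, Matrix.mul_add, hp1, hPV, hVPU]
    abel
  have target_eq : Lᵀ * Up * L - U = Vᵀ * Up * (Vᵀ)ᴴ := by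
    rw [hLt, hLsum, hexp, Matrix.conjTranspose_eq_transpose_of_trivial,
      Matrix.transpose_transpose, hVt]
    simp only [Matrix.neg_mul]
    abel
  have hUppsd : Up.PosSemidef := by
    have h := hUpsd.mul_mul_conjTranspose_same Up
    rwa [Matrix.conjTranspose_eq_transpose_of_trivial, hUps, hp2] at h
  have final := hUppsd.mul_mul_conjTranspose_same Vᵀ
  rwa [← target_eq] at final
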